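/- arXiv:1103.2729 — 4 statements merged into one kernel-verified Lean document; each statement's English description precedes it below -/
import Mathlib

section
/- Let E and F be real inner product spaces, let r be a positive integer, and let φ : Fin r → E and ψ : Fin r → F be families of vectors. Let M be the Gram matrix of φ in E and H the Gram matrix of ψ in F, and assume M is positive definite (equivalently, the φ_j are linearly independent). Then for every x ∈ ℝ^r, ‖Σ_{j=1}^r x_j ψ_j‖_F ≤ √(‖H‖₂ · ‖M⁻¹‖₂) · ‖Σ_{j=1}^r x_j φ_j‖_E. -/
open scoped Matrix RealInnerProductSpace

/-- The spectral norm of a real `r × r` matrix: the operator norm of the matrix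
acting on Euclidean space `ℝ^r` with the `ℓ²` norm. -/
noncomputable def matSpectralNorm {r : ℕ} (A : Matrix (Fin r) (Fin r) ℝ) : ℝ :=
  ‖Matrix.toEuclideanCLM (𝕜 := ℝ) A‖

/-- The Gram matrix of a family `φ : Fin r → E` in a real inner product space `E`:
the `r × r` real matrix with entries `M i j = ⟪φ j, φ i⟫`. -/
noncomputable def gramMatrix {E : Type*} [NormedAddCommGroup E] [InnerProductSpace ℝ E]
    {r : ℕ} (φ : Fin r → E) : Matrix (Fin r) (Fin r) ℝ :=
  Matrix.of fun i j => ⟪φ j, φ i⟫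

lemma matSpectralNorm_nonneg {r : ℕ} (A : Matrix (Fin r) (Fin r) ℝ) : 0 ≤ matSpectralNorm A :=
  norm_nonneg _

/-- Quadratic form bound by the spectral norm. -/
lemma quad_le_matSpectralNorm {r : ℕ} (A : Matrix (Fin r) (Fin r) ℝ) (x : Fin r → ℝ) :
    x ⬝ᵥ A *ᵥ x ≤ matSpectralNorm A * (x ⬝ᵥ x) := by
  set y : EuclideanSpace ℝ (Fin r) := (WithLp.equiv 2 (Fin r → ℝ)).symm x with hy
  have h1 : x ⬝ᵥ A *ᵥ x = ⟪y, Matrix.toEuclideanCLM (𝕜 := ℝ) A y⟫ := by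
    rw [hy, Matrix.inner_toEuclideanCLM]
    simp
  have h2 : x ⬝ᵥ x = ‖y‖ ^ 2 := by
    rw [← real_inner_self_eq_norm_sq, hy]
    simp [PiLp.inner_apply, dotProduct]
    rw [EuclideanSpace.norm_eq, Real.sq_sqrt (by positivity)]
    simp [sq]
  rw [h1, h2]
  calc ⟪y, Matrix.toEuclideanCLM (𝕜 := ℝ) A y⟫
      ≤ ‖y‖ * ‖Matrix.toEuclideanCLM (𝕜 := ℝ) A y‖ := real_inner_le_norm _ _
    _ ≤ ‖y‖ * (‖Matrix.toEuclideanCLM (𝕜 := ℝ) A‖ * ‖y‖) := by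
        gcongr; exact (Matrix.toEuclideanCLM (𝕜 := ℝ) A).le_opNorm y
    _ = matSpectralNorm A * ‖y‖ ^ 2 := by rw [matSpectralNorm]; ring

/-- The quadratic form of a Gram matrix is the squared norm of the corresponding
linear combination (as an inner product). -/
lemma quad_gramMatrix {E : Type*} [NormedAddCommGroup E] [InnerProductSpace ℝ E]
    {r : ℕ} (φ : Fin r → E) (x : Fin r → ℝ) :
    x ⬝ᵥ (gramMatrix φ) *ᵥ x = ⟪∑ j, x j • φ j, ∑ j, x j • φ j⟫ := by
  rw [sum_inner]
  simp only [dotProduct, Matrix.mulVec, dotProduct, gramMatrix, Matrix.of_apply,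
    inner_sum, real_inner_smul_left, real_inner_smul_right, Finset.mul_sum]
  apply Finset.sum_congr rfl
  intro i _
  apply Finset.sum_congr rfl
  intro j _
  rw [real_inner_comm (φ j)]
  ring

lemma quad_gramMatrix_norm {E : Type*} [NormedAddCommGroup E] [InnerProductSpace ℝ E]
    {r : ℕ} (φ : Fin r → E) (x : Fin r → ℝ) :
    x ⬝ᵥ (gramMatrix φ) *ᵥ x = ‖∑ j, x j • φ j‖ ^ 2 := by
  rw [quad_gramMatrix, real_inner_self_eq_norm_sq]

/-- For a positive definite matrix `M`, `‖x‖² ≤ ‖M⁻¹‖ ⬝ xᵀ M x`. -/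
lemma dot_self_le {r : ℕ} {M : Matrix (Fin r) (Fin r) ℝ} (hM : M.PosDef)
    (x : Fin r → ℝ) :
    x ⬝ᵥ x ≤ matSpectralNorm M⁻¹ * (x ⬝ᵥ M *ᵥ x) := by
  obtain ⟨S, hSsym, hSS⟩ : ∃ S : Matrix (Fin r) (Fin r) ℝ, Sᵀ = S ∧ S * S = M :=
    by
      open scoped MatrixOrder in
      exact ⟨CFC.sqrt M, by simpa [Matrix.IsHermitian] using (CFC.sqrt_nonneg M).1,
        CFC.sqrt_mul_sqrt_self M hM.posSemidef.nonneg⟩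
  have hdet : M.det ≠ 0 := ne_of_gt hM.det_pos
  have hdetS : IsUnit S.det := by
    rw [isUnit_iff_ne_zero]
    intro h
    apply hdet
    rw [← hSS, Matrix.det_mul, h, mul_zero]
  have hSMS : S * M⁻¹ * S = 1 := by
    rw [← hSS, Matrix.mul_inv_rev]
    have e : S * (S⁻¹ * S⁻¹) * S = (S * S⁻¹) * (S⁻¹ * S) := by
      simp only [Matrix.mul_assoc]
    rw [e, Matrix.mul_nonsing_inv _ hdetS, Matrix.nonsing_inv_mul _ hdetS, Matrix.one_mul]
  set y := S *ᵥ x with hy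
  have key : ∀ B : Matrix (Fin r) (Fin r) ℝ, x ⬝ᵥ (S * B * S) *ᵥ x = y ⬝ᵥ B *ᵥ y := by
    intro B
    rw [hy, ← Matrix.mulVec_mulVec, ← Matrix.mulVec_mulVec, Matrix.dotProduct_mulVec x S,
      ← Matrix.mulVec_transpose, hSsym]
  have h1 : x ⬝ᵥ x = y ⬝ᵥ M⁻¹ *ᵥ y := by
    rw [← key M⁻¹, hSMS, Matrix.one_mulVec]
  have h2 : y ⬝ᵥ y = x ⬝ᵥ M *ᵥ x := by
    have e1 : y ⬝ᵥ y = y ⬝ᵥ (1 : Matrix (Fin r) (Fin r) ℝ) *ᵥ y := by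
      rw [Matrix.one_mulVec]
    rw [e1, ← key, Matrix.mul_one, hSS]
  rw [h1, ← h2]
  exact quad_le_matSpectralNorm M⁻¹ y

/-- POD inverse estimate: if `M` is the (positive definite) Gram matrix of `φ` in `E`
and `H` the Gram matrix of `ψ` in `F`, then for every `x ∈ ℝ^r`,
`‖∑ x j • ψ j‖ ≤ √(‖H‖₂ ‖M⁻¹‖₂) ‖∑ x j • φ j‖`. -/
theorem pod_inverse_estimate
    {E F : Type*} [NormedAddCommGroup E] [InnerProductSpace ℝ E]
    [NormedAddCommGroup F] [InnerProductSpace ℝ F]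
    (r : ℕ) (hr : 0 < r) (φ : Fin r → E) (ψ : Fin r → F)
    (hMpos : (gramMatrix φ).PosDef) :
    ∀ x : Fin r → ℝ,
      ‖∑ j, x j • ψ j‖ ≤
        Real.sqrt (matSpectralNorm (gramMatrix ψ) * matSpectralNorm (gramMatrix φ)⁻¹) *
          ‖∑ j, x j • φ j‖ := by
  intro x
  have key : ‖∑ j, x j • ψ j‖ ^ 2 ≤
      (matSpectralNorm (gramMatrix ψ) * matSpectralNorm (gramMatrix φ)⁻¹) *
        ‖∑ j, x j • φ j‖ ^ 2 := by
    calc ‖∑ j, x j • ψ j‖ ^ 2 = x ⬝ᵥ (gramMatrix ψ) *ᵥ x := (quad_gramMatrix_norm ψ x).symm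
      _ ≤ matSpectralNorm (gramMatrix ψ) * (x ⬝ᵥ x) := quad_le_matSpectralNorm _ x
      _ ≤ matSpectralNorm (gramMatrix ψ) *
            (matSpectralNorm (gramMatrix φ)⁻¹ * (x ⬝ᵥ (gramMatrix φ) *ᵥ x)) := by
          gcongr
          · exact matSpectralNorm_nonneg _
          · exact dot_self_le hMpos x
      _ = (matSpectralNorm (gramMatrix ψ) * matSpectralNorm (gramMatrix φ)⁻¹) *
            ‖∑ j, x j • φ j‖ ^ 2 := by rw [quad_gramMatrix_norm]; ring
  have h := Real.sqrt_le_sqrt key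
  rwa [Real.sqrt_sq (norm_nonneg _),
    Real.sqrt_mul (mul_nonneg (matSpectralNorm_nonneg _) (matSpectralNorm_nonneg _)),
    Real.sqrt_sq (norm_nonneg _)] at h
end

section
/- Let E be a real inner product space, let Δt > 0, let N be a natural number, and let u : ℕ → E, f : ℕ → E and a : ℕ → ℝ be sequences with a_n ≥ 0 for all n. Suppose that for every n with 0 ≤ n ≤ N−1 the backward Euler energy identity ⟨u_{n+1} − u_n, u_{n+1}⟩ + Δt · a_n = Δt · ⟨f_{n+1}, u_{n+1}⟩ holds. Then ‖u_N‖ ≤ ‖u_0‖ + Δt · Σ_{n=0}^{N−1} ‖f_{n+1}‖. -/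
open scoped RealInnerProductSpace

theorem backwardEuler_step
    {E : Type*} [NormedAddCommGroup E] [InnerProductSpace ℝ E]
    (Δt : ℝ) (hΔt : 0 < Δt) (u f : ℕ → E) (a : ℕ → ℝ)
    (n : ℕ) (han : 0 ≤ a n)
    (h : ⟪u (n + 1) - u n, u (n + 1)⟫ + Δt * a n = Δt * ⟪f (n + 1), u (n + 1)⟫) :
    ‖u (n + 1)‖ ≤ ‖u n‖ + Δt * ‖f (n + 1)‖ := by
  have hsub : ⟪u (n + 1) - u n, u (n + 1)⟫
      = ‖u (n + 1)‖ ^ 2 - ⟪u n, u (n + 1)⟫ := by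
    rw [inner_sub_left, real_inner_self_eq_norm_sq]
  have key : ‖u (n + 1)‖ ^ 2 ≤ (‖u n‖ + Δt * ‖f (n + 1)‖) * ‖u (n + 1)‖ := by
    have h1 : ⟪u n, u (n + 1)⟫ ≤ ‖u n‖ * ‖u (n + 1)‖ := real_inner_le_norm _ _
    have h2 : ⟪f (n + 1), u (n + 1)⟫ ≤ ‖f (n + 1)‖ * ‖u (n + 1)‖ :=
      real_inner_le_norm _ _
    nlinarith [hsub, h]
  rcases eq_or_lt_of_le (norm_nonneg (u (n + 1))) with h0 | h0
  · rw [← h0]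
    positivity
  · have := (mul_le_mul_iff_of_pos_right h0).mp (by nlinarith [key] :
      ‖u (n + 1)‖ * ‖u (n + 1)‖ ≤ (‖u n‖ + Δt * ‖f (n + 1)‖) * ‖u (n + 1)‖)
    exact this

/-- Unconditional stability of the backward Euler VMS-POD scheme: if the energy
identity `⟪u (n+1) - u n, u (n+1)⟫ + Δt * a n = Δt * ⟪f (n+1), u (n+1)⟫` holds for all
`0 ≤ n ≤ N - 1` with `a n ≥ 0`, then `‖u N‖ ≤ ‖u 0‖ + Δt * ∑_{n=0}^{N-1} ‖f (n+1)‖`. -/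
theorem backwardEuler_stability
    {E : Type*} [NormedAddCommGroup E] [InnerProductSpace ℝ E]
    (Δt : ℝ) (hΔt : 0 < Δt) (N : ℕ) (u f : ℕ → E) (a : ℕ → ℝ)
    (ha : ∀ n, 0 ≤ a n)
    (hscheme : ∀ n, n < N →
      ⟪u (n + 1) - u n, u (n + 1)⟫ + Δt * a n = Δt * ⟪f (n + 1), u (n + 1)⟫) :
    ‖u N‖ ≤ ‖u 0‖ + Δt * ∑ n ∈ Finset.range N, ‖f (n + 1)‖ := by
  induction N with
  | zero => simp
  | succ N ih =>
    have ihN := ih (fun n hn => hscheme n (hn.trans (Nat.lt_succ_self N)))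
    have step := backwardEuler_step Δt hΔt u f a N (ha N)
      (hscheme N (Nat.lt_succ_self N))
    rw [Finset.sum_range_succ, mul_add]
    linarith
end

section
/- Let X be a real inner product space, let N be a positive integer, and let u_1, …, u_N ∈ X be snapshots. Let K be the N×N snapshot correlation matrix with K_{ij} = (1/N)⟨u_j, u_i⟩_X. Suppose λ_1 ≥ λ_2 ≥ … ≥ λ_N ≥ 0 and v_1, …, v_N ∈ ℝ^N satisfy K v_k = λ_k v_k and ⟨v_k, v_l⟩ = (1/N)δ_{kl} for all k, l, with λ_k > 0 exactly for k ≤ d. Define the POD modes φ_k = (1/√λ_k) Σ_{j=1}^N (v_k)_j u_j for k ≤ d. Then for every r with 0 ≤ r ≤ d the POD error formula holds: (1/N) Σ_{i=1}^N ‖u_i − Σ_{j=1}^r ⟨u_i, φ_j⟩_X φ_j‖_X² = Σ_{j=r+1}^d λ_j. -/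
open scoped Matrix RealInnerProductSpace

/-- POD error formula: with snapshots `u i` in a real inner product space `X`,
correlation matrix `K i j = (1/N) ⟪u j, u i⟫`, decreasingly ordered eigenvalues
`λ 0 ≥ λ 1 ≥ … ≥ λ (N-1) ≥ 0` (positive exactly for indices `< d`), eigenvectors
normalized by `⟨v k, v l⟩ = (1/N) δ k l`, and POD modes
`φ k = (1/√(λ k)) ∑ j, (v k) j • u j`, for every `r ≤ d` the average squared
projection error of the snapshots onto the first `r` POD modes equals the tail
eigenvalue sum `∑_{j=r}^{d-1} λ j`. -/
theorem pod_error_formula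
    {X : Type*} [NormedAddCommGroup X] [InnerProductSpace ℝ X]
    (N : ℕ) (hN : 0 < N) (u : Fin N → X)
    (K : Matrix (Fin N) (Fin N) ℝ)
    (hK : ∀ i j, K i j = (1 / (N : ℝ)) * ⟪u j, u i⟫)
    (lam : Fin N → ℝ) (v : Fin N → Fin N → ℝ)
    (hsorted : ∀ k l : Fin N, k ≤ l → lam l ≤ lam k)
    (hnonneg : ∀ k, 0 ≤ lam k)
    (heig : ∀ k, K.mulVec (v k) = lam k • v k)
    (horth : ∀ k l, v k ⬝ᵥ v l = if k = l then 1 / (N : ℝ) else 0)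
    (d : ℕ) (hd : d ≤ N)
    (hpos : ∀ k : Fin N, 0 < lam k ↔ (k : ℕ) < d)
    (φ : Fin N → X)
    (hφ : ∀ k : Fin N, (k : ℕ) < d →
      φ k = (Real.sqrt (lam k))⁻¹ • ∑ j, v k j • u j) :
    ∀ r : ℕ, r ≤ d →
      (1 / (N : ℝ)) * ∑ i : Fin N,
          ‖u i - ∑ j ∈ Finset.univ.filter (fun j : Fin N => (j : ℕ) < r),
              ⟪u i, φ j⟫ • φ j‖ ^ 2
        = ∑ j ∈ Finset.univ.filter (fun j : Fin N => r ≤ (j : ℕ) ∧ (j : ℕ) < d), lam j := by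

  intro r hr
  have hN' : (N : ℝ) ≠ 0 := Nat.cast_ne_zero.mpr hN.ne'
  -- symmetry of K
  have hsym : ∀ i j, K i j = K j i := by
    intro i j; rw [hK, hK, real_inner_comm]
  -- eigenvalue equations, componentwise
  have hmul : ∀ k i, ∑ m, K i m * v k m = lam k * v k i := by
    intro k i
    have := congrFun (heig k) i
    simpa [Matrix.mulVec, dotProduct] using this
  have hmul' : ∀ k i, ∑ m, v k m * K m i = lam k * v k i := by
    intro k i
    rw [← hmul k i]
    exact Finset.sum_congr rfl fun m _ => by rw [hsym m i, mul_comm]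
  -- lam vanishes beyond d
  have hlam0 : ∀ k : Fin N, ¬ (k : ℕ) < d → lam k = 0 := by
    intro k hk
    have h1 : ¬ 0 < lam k := fun h => hk ((hpos k).mp h)
    exact le_antisymm (not_lt.mp h1) (hnonneg k)
  -- inner products of snapshots with modes
  have hup : ∀ (i j : Fin N), (j : ℕ) < d →
      ⟪u i, φ j⟫ = (N : ℝ) * Real.sqrt (lam j) * v j i := by
    intro i j hj
    have hlam_pos : 0 < lam j := (hpos j).mpr hj
    have hsq : Real.sqrt (lam j) * Real.sqrt (lam j) = lam j := Real.mul_self_sqrt hlam_pos.le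
    have hsqpos : 0 < Real.sqrt (lam j) := Real.sqrt_pos.mpr hlam_pos
    have hui : ∀ m, ⟪u i, u m⟫ = (N : ℝ) * K m i := by
      intro m
      rw [hK m i]
      field_simp
    rw [hφ j hj, real_inner_smul_right, inner_sum]
    have : ∑ m, ⟪u i, v j m • u m⟫ = (N : ℝ) * (lam j * v j i) := by
      rw [← hmul' j i, Finset.mul_sum]
      refine Finset.sum_congr rfl fun m _ => ?_
      rw [real_inner_smul_right, hui m]; ring
    rw [this]
    have h0 : Real.sqrt (lam j) ≠ 0 := hsqpos.ne'
    have key : (Real.sqrt (lam j))⁻¹ * lam j = Real.sqrt (lam j) := by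
      nth_rewrite 2 [← hsq]
      rw [← mul_assoc, inv_mul_cancel₀ h0, one_mul]
    calc (Real.sqrt (lam j))⁻¹ * ((N : ℝ) * (lam j * v j i))
        = ((Real.sqrt (lam j))⁻¹ * lam j) * ((N : ℝ) * v j i) := by ring
      _ = (N : ℝ) * Real.sqrt (lam j) * v j i := by rw [key]; ring
  -- orthonormality of modes
  have hφφ : ∀ (j k : Fin N), (j : ℕ) < d → (k : ℕ) < d →
      ⟪φ j, φ k⟫ = if j = k then 1 else 0 := by
    intro j k hj hk
    have hlam_posj : 0 < lam j := (hpos j).mpr hj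
    have hlam_posk : 0 < lam k := (hpos k).mpr hk
    have hsk : 0 < Real.sqrt (lam k) := Real.sqrt_pos.mpr hlam_posk
    have hsj : 0 < Real.sqrt (lam j) := Real.sqrt_pos.mpr hlam_posj
    rw [hφ k hk, real_inner_smul_right, inner_sum]
    have h1 : ∑ m, ⟪φ j, v k m • u m⟫ = (N : ℝ) * Real.sqrt (lam j) * (v k ⬝ᵥ v j) := by
      rw [dotProduct, Finset.mul_sum]
      refine Finset.sum_congr rfl fun m _ => ?_
      rw [real_inner_smul_right, real_inner_comm, hup m j hj]; ring
    rw [h1, horth k j]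
    by_cases h : j = k
    · subst h
      simp only [if_pos rfl]
      field_simp; simp [hN']
    · rw [if_neg (fun hh => h hh.symm), if_neg h]
      simp
  -- norm expansion for projection error
  have hnorm : ∀ (i : Fin N) (s : Finset (Fin N)), (∀ j ∈ s, (j : ℕ) < d) →
      ‖u i - ∑ j ∈ s, ⟪u i, φ j⟫ • φ j‖ ^ 2
        = ‖u i‖ ^ 2 - ∑ j ∈ s, ⟪u i, φ j⟫ ^ 2 := by
    intro i s hs
    set b : X := ∑ j ∈ s, ⟪u i, φ j⟫ • φ j with hb
    have h1 : ⟪u i, b⟫ = ∑ j ∈ s, ⟪u i, φ j⟫ ^ 2 := by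
      rw [hb, inner_sum]
      refine Finset.sum_congr rfl fun j _ => ?_
      rw [real_inner_smul_right]; ring
    have h2 : ⟪b, b⟫ = ∑ j ∈ s, ⟪u i, φ j⟫ ^ 2 := by
      rw [hb, inner_sum]
      refine Finset.sum_congr rfl fun k hk => ?_
      rw [real_inner_smul_right, sum_inner]
      rw [Finset.sum_eq_single k]
      · rw [real_inner_smul_left, hφφ k k (hs k hk) (hs k hk), if_pos rfl]; ring
      · intro j hj hjk
        rw [real_inner_smul_left, hφφ j k (hs j hj) (hs k hk), if_neg hjk]; ring
      · intro h; exact absurd hk h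
    have h3 : ‖b‖ ^ 2 = ∑ j ∈ s, ⟪u i, φ j⟫ ^ 2 := by
      rw [← real_inner_self_eq_norm_sq]; exact h2
    rw [norm_sub_sq_real, h1, h3]; ring
  -- sum over snapshots of squared coefficients
  have hsumc : ∀ j : Fin N, (j : ℕ) < d →
      ∑ i, ⟪u i, φ j⟫ ^ 2 = (N : ℝ) * lam j := by
    intro j hj
    have hlam_pos : 0 < lam j := (hpos j).mpr hj
    have hvv : ∑ i, v j i * v j i = 1 / (N : ℝ) := by
      have := horth j j; rw [if_pos rfl] at this
      simpa [dotProduct] using this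
    have : ∑ i, ⟪u i, φ j⟫ ^ 2
        = (N : ℝ) ^ 2 * lam j * ∑ i, v j i * v j i := by
      rw [Finset.mul_sum]
      refine Finset.sum_congr rfl fun i _ => ?_
      rw [hup i j hj]
      have hsq : Real.sqrt (lam j) ^ 2 = lam j := Real.sq_sqrt hlam_pos.le
      nlinarith [hsq]
    rw [this, hvv]
    field_simp
  -- completeness: trace identity
  have hVV : ∀ i i' : Fin N, (∑ k, (N : ℝ) * (v k i * v k i')) = if i = i' then 1 else 0 := by
    have h1 : (Matrix.of v) * ((N : ℝ) • (Matrix.of v)ᵀ) = 1 := by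
      ext k l
      simp only [Matrix.mul_apply, Matrix.smul_apply, Matrix.transpose_apply, Matrix.of_apply,
        smul_eq_mul, Matrix.one_apply]
      have := horth k l
      rw [dotProduct] at this
      calc ∑ i, v k i * ((N : ℝ) * v l i) = (N : ℝ) * ∑ i, v k i * v l i := by
            rw [Finset.mul_sum]; exact Finset.sum_congr rfl fun i _ => by ring
        _ = if k = l then 1 else 0 := by
            rw [this]; split <;> simp [hN']
    have h2 := mul_eq_one_comm.mp h1
    intro i i'
    have := congrFun (congrFun h2 i) i'
    simp only [Matrix.mul_apply, Matrix.smul_apply, Matrix.transpose_apply, Matrix.of_apply,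
      smul_eq_mul, Matrix.one_apply] at this
    rw [← this]
    exact Finset.sum_congr rfl fun k _ => by ring
  have htr : ∑ i, K i i = ∑ k, lam k := by
    have h1 : ∀ i : Fin N, (∑ i' : Fin N, K i i' * (if i = i' then 1 else 0)) = K i i := by
      intro i
      simp [mul_ite]
    calc ∑ i, K i i = ∑ i, ∑ i', K i i' * ∑ k, (N : ℝ) * (v k i * v k i') := by
          refine Finset.sum_congr rfl fun i _ => ?_
          rw [← h1 i]
          exact Finset.sum_congr rfl fun i' _ => by rw [hVV]
      _ = ∑ i, ∑ i', ∑ k, (N : ℝ) * (v k i * (K i i' * v k i')) := by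
          refine Finset.sum_congr rfl fun i _ => Finset.sum_congr rfl fun i' _ => ?_
          rw [Finset.mul_sum]
          exact Finset.sum_congr rfl fun k _ => by ring
      _ = ∑ i, ∑ k, ∑ i', (N : ℝ) * (v k i * (K i i' * v k i')) :=
          Finset.sum_congr rfl fun i _ => Finset.sum_comm
      _ = ∑ k, ∑ i, ∑ i', (N : ℝ) * (v k i * (K i i' * v k i')) := Finset.sum_comm
      _ = ∑ k, (N : ℝ) * ∑ i, v k i * (∑ i', K i i' * v k i') := by
          simp only [Finset.mul_sum]
      _ = ∑ k, (N : ℝ) * ∑ i, v k i * (lam k * v k i) := by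
          refine Finset.sum_congr rfl fun k _ => ?_
          congr 1
          refine Finset.sum_congr rfl fun i _ => ?_
          congr 1
          exact hmul k i
      _ = ∑ k, lam k := by
          refine Finset.sum_congr rfl fun k _ => ?_
          have hvv : ∑ i, v k i * v k i = 1 / (N : ℝ) := by
            have := horth k k; rw [if_pos rfl] at this
            simpa [dotProduct] using this
          have : ∑ i, v k i * (lam k * v k i) = lam k * ∑ i, v k i * v k i := by
            rw [Finset.mul_sum]; exact Finset.sum_congr rfl fun i _ => by ring
          rw [this, hvv]; field_simp
  have husum : ∑ i, ‖u i‖ ^ 2 = (N : ℝ) * ∑ k, lam k := by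
    rw [← htr, Finset.mul_sum]
    refine Finset.sum_congr rfl fun i _ => ?_
    rw [← real_inner_self_eq_norm_sq, hK i i]
    field_simp
  -- split the full eigenvalue sum
  have hsplit : ∑ k, lam k
      = ∑ j ∈ Finset.univ.filter (fun j : Fin N => (j : ℕ) < r), lam j
        + ∑ j ∈ Finset.univ.filter (fun j : Fin N => r ≤ (j : ℕ) ∧ (j : ℕ) < d), lam j := by
    rw [← Finset.sum_filter_add_sum_filter_not Finset.univ (fun j : Fin N => (j : ℕ) < r)]
    congr 1
    rw [← Finset.sum_filter_add_sum_filter_not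
        (Finset.univ.filter (fun j : Fin N => ¬ (j : ℕ) < r)) (fun j : Fin N => (j : ℕ) < d),
      Finset.filter_filter, Finset.filter_filter]
    have h0 : (∑ j ∈ Finset.univ.filter (fun j : Fin N => ¬ (j : ℕ) < r ∧ ¬ (j : ℕ) < d), lam j) = 0 :=
      Finset.sum_eq_zero fun j hj => hlam0 j (by
        simp only [Finset.mem_filter] at hj; exact hj.2.2)
    rw [h0, add_zero]
    refine Finset.sum_congr ?_ fun _ _ => rfl
    ext j
    simp [not_lt]
  -- main computation
  have hfilt : ∀ j : Fin N, j ∈ Finset.univ.filter (fun j : Fin N => (j : ℕ) < r) → (j : ℕ) < d := by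
    intro j hj
    simp only [Finset.mem_filter] at hj
    exact lt_of_lt_of_le hj.2 hr
  have hmain : ∑ i : Fin N,
      ‖u i - ∑ j ∈ Finset.univ.filter (fun j : Fin N => (j : ℕ) < r), ⟪u i, φ j⟫ • φ j‖ ^ 2
      = (N : ℝ) * ∑ j ∈ Finset.univ.filter (fun j : Fin N => r ≤ (j : ℕ) ∧ (j : ℕ) < d), lam j := by
    have h1 : ∀ i : Fin N,
        ‖u i - ∑ j ∈ Finset.univ.filter (fun j : Fin N => (j : ℕ) < r), ⟪u i, φ j⟫ • φ j‖ ^ 2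
        = ‖u i‖ ^ 2 - ∑ j ∈ Finset.univ.filter (fun j : Fin N => (j : ℕ) < r), ⟪u i, φ j⟫ ^ 2 :=
      fun i => hnorm i _ hfilt
    calc ∑ i : Fin N,
        ‖u i - ∑ j ∈ Finset.univ.filter (fun j : Fin N => (j : ℕ) < r), ⟪u i, φ j⟫ • φ j‖ ^ 2
        = ∑ i, (‖u i‖ ^ 2
            - ∑ j ∈ Finset.univ.filter (fun j : Fin N => (j : ℕ) < r), ⟪u i, φ j⟫ ^ 2) :=
          Finset.sum_congr rfl fun i _ => h1 i
      _ = ∑ i, ‖u i‖ ^ 2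
          - ∑ i, ∑ j ∈ Finset.univ.filter (fun j : Fin N => (j : ℕ) < r), ⟪u i, φ j⟫ ^ 2 :=
          Finset.sum_sub_distrib _ _
      _ = ∑ i, ‖u i‖ ^ 2
          - ∑ j ∈ Finset.univ.filter (fun j : Fin N => (j : ℕ) < r), ∑ i, ⟪u i, φ j⟫ ^ 2 := by
          rw [Finset.sum_comm]
      _ = (N : ℝ) * ∑ k, lam k
          - (N : ℝ) * ∑ j ∈ Finset.univ.filter (fun j : Fin N => (j : ℕ) < r), lam j := by
          rw [husum]
          congr 1
          rw [Finset.mul_sum]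
          refine Finset.sum_congr rfl fun j hj => ?_
          exact hsumc j (hfilt j hj)
      _ = (N : ℝ) * ∑ j ∈ Finset.univ.filter (fun j : Fin N => r ≤ (j : ℕ) ∧ (j : ℕ) < d), lam j := by
          rw [hsplit]; ring
  rw [hmain]
  field_simp
end

section
/- Let X be a real inner product space, let N be a positive integer, and let u_1, …, u_N ∈ X be snapshots. Let K be the N×N snapshot correlation matrix with K_{ij} = (1/N)⟨u_j, u_i⟩_X, and let λ_1 ≥ λ_2 ≥ … ≥ λ_N ≥ 0 be the eigenvalues of K listed in decreasing order (with multiplicity). Then for every r with 0 ≤ r ≤ N and every orthonormal family ψ_1, …, ψ_r in X (i.e. ⟨ψ_i, ψ_j⟩_X = δ_{ij}), one has (1/N) Σ_{i=1}^N ‖u_i − Σ_{j=1}^r ⟨u_i, ψ_j⟩_X ψ_j‖_X² ≥ Σ_{j=r+1}^N λ_j. -/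
open scoped Matrix RealInnerProductSpace

lemma pod_comb {N r : ℕ} (hr : r ≤ N) (lam t : Fin N → ℝ)
    (hsorted : ∀ k l : Fin N, k ≤ l → lam l ≤ lam k) (hnn : ∀ k, 0 ≤ lam k)
    (ht0 : ∀ k, 0 ≤ t k) (ht1 : ∀ k, t k ≤ 1) (hsum : ∑ k, t k ≤ (r : ℝ)) :
    ∑ k, lam k * t k ≤ ∑ k ∈ Finset.univ.filter (fun k : Fin N => (k : ℕ) < r), lam k := by
  rcases eq_or_lt_of_le hr with h | h
  · have hfil : Finset.univ.filter (fun k : Fin N => (k : ℕ) < r) = Finset.univ := by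
      ext k; simpa [h] using k.isLt
    rw [hfil]
    refine Finset.sum_le_sum fun k _ => ?_
    nlinarith [hnn k, ht1 k, ht0 k]
  · set i0 : Fin N := ⟨r, h⟩ with hi0
    set c := lam i0 with hc
    set A := Finset.univ.filter (fun k : Fin N => (k : ℕ) < r) with hA
    set B := Finset.univ.filter (fun k : Fin N => ¬ (k : ℕ) < r) with hB
    have hcard : A.card = r := by
      have : A = Finset.Iio i0 := by
        ext k
        simp [hA, Finset.mem_Iio, Fin.lt_def, hi0]
      rw [this, Fin.card_Iio]
    have hsplit : ∀ f : Fin N → ℝ, ∑ k ∈ A, f k + ∑ k ∈ B, f k = ∑ k, f k :=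
      fun f => Finset.sum_filter_add_sum_filter_not _ _ f
    have e1 : ∑ k ∈ A, (lam k * t k + c * (1 - t k)) ≤ ∑ k ∈ A, lam k := by
      refine Finset.sum_le_sum fun k hk => ?_
      have hk' : (k : ℕ) < r := by simpa [hA] using hk
      have hle : c ≤ lam k := hsorted k i0 (by simp [Fin.le_def, hi0]; omega)
      nlinarith [ht1 k, ht0 k]
    have e1' : ∑ k ∈ A, (lam k * t k + c * (1 - t k))
        = ∑ k ∈ A, lam k * t k + c * ((r : ℝ) - ∑ k ∈ A, t k) := by
      rw [Finset.sum_add_distrib, ← Finset.mul_sum, Finset.sum_sub_distrib,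
        Finset.sum_const, hcard]
      simp
    have e2 : ∑ k ∈ B, lam k * t k ≤ c * ∑ k ∈ B, t k := by
      rw [Finset.mul_sum]
      refine Finset.sum_le_sum fun k hk => ?_
      have hk' : r ≤ (k : ℕ) := by
        have := Finset.mem_filter.mp hk
        omega
      have hle : lam k ≤ c := hsorted i0 k (by simp [Fin.le_def, hi0]; omega)
      exact mul_le_mul_of_nonneg_right hle (ht0 k)
    have hc0 : 0 ≤ c := hnn i0
    have h1 := hsplit (fun k => lam k * t k)
    have h2 := hsplit t
    nlinarith [e1, e1', e2]

/-- POD optimality: with snapshots `u i` in a real inner product space `X` and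
correlation matrix `K i j = (1/N) ⟪u j, u i⟫` (which is Hermitian), let
`λ 0 ≥ λ 1 ≥ … ≥ λ (N-1) ≥ 0` be the eigenvalues of `K` listed in decreasing order
with multiplicity.  Then for every `r ≤ N` and every orthonormal family
`ψ : Fin r → X`, the average squared projection error of the snapshots onto
`span {ψ 0, …, ψ (r-1)}` is at least the tail eigenvalue sum `∑_{j ≥ r} λ j`. -/
theorem pod_optimality
    {X : Type*} [NormedAddCommGroup X] [InnerProductSpace ℝ X]
    (N : ℕ) (hN : 0 < N) (u : Fin N → X)
    (K : Matrix (Fin N) (Fin N) ℝ)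
    (hK : ∀ i j, K i j = (1 / (N : ℝ)) * ⟪u j, u i⟫)
    (hherm : K.IsHermitian)
    (lam : Fin N → ℝ)
    (hsorted : ∀ k l : Fin N, k ≤ l → lam l ≤ lam k)
    (hnonneg : ∀ k, 0 ≤ lam k)
    (heigen : ∃ σ : Equiv.Perm (Fin N), ∀ k, lam k = hherm.eigenvalues (σ k)) :
    ∀ r : ℕ, r ≤ N → ∀ ψ : Fin r → X,
      (∀ i j : Fin r, ⟪ψ i, ψ j⟫ = if i = j then (1 : ℝ) else 0) →
      ∑ j ∈ Finset.univ.filter (fun j : Fin N => r ≤ (j : ℕ)), lam j ≤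
        (1 / (N : ℝ)) * ∑ i : Fin N, ‖u i - ∑ j, ⟪u i, ψ j⟫ • ψ j‖ ^ 2 := by
  obtain ⟨σ, hσ⟩ := heigen
  intro r hr ψ hψ
  have hN' : (0:ℝ) < N := by exact_mod_cast hN
  have hψon : Orthonormal ℝ ψ := by
    rw [orthonormal_iff_ite]; intro i j; simpa using hψ i j
  set μ : Fin N → ℝ := hherm.eigenvalues with hμdef
  set B := hherm.eigenvectorBasis with hBdef
  have hμnn : ∀ m, 0 ≤ μ m := fun m => by
    have := hnonneg (σ.symm m)
    rwa [hσ (σ.symm m), Equiv.apply_symm_apply] at this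
  -- transformed snapshots
  set w : Fin N → X := fun m => ∑ i, (B m) i • u i with hwdef
  have hwx : ∀ m (x : X), ⟪w m, x⟫ = ∑ i, (B m) i * ⟪u i, x⟫ := by
    intro m x
    rw [hwdef]
    rw [sum_inner]
    simp [real_inner_smul_left]
  have huu : ∀ i j : Fin N, ⟪u j, u i⟫ = (N:ℝ) * K i j := by
    intro i j; rw [hK]; field_simp
  have hBon : ∀ m l, ∑ i, (B m) i * (B l) i = if m = l then (1:ℝ) else 0 := by
    intro m l
    have h := (orthonormal_iff_ite.mp B.orthonormal) m l
    simpa [PiLp.inner_apply, RCLike.inner_apply, conj_trivial, mul_comm] using h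
  have hww : ∀ m l, ⟪w m, w l⟫ = (N:ℝ) * μ l * (if m = l then 1 else 0) := by
    intro m l
    rw [hwx m (w l)]
    have h1 : ∀ i, ⟪u i, w l⟫ = (N:ℝ) * (μ l * (B l) i) := by
      intro i
      rw [real_inner_comm, hwx l (u i)]
      have : ∑ j, (B l) j * ⟪u j, u i⟫ = (N:ℝ) * ∑ j, K i j * (B l) j := by
        rw [Finset.mul_sum]
        refine Finset.sum_congr rfl fun j _ => ?_
        rw [huu]; ring
      rw [this]
      have h2 : ∑ j, K i j * (B l) j = (K *ᵥ ⇑(B l)) i := rfl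
      rw [h2, hherm.mulVec_eigenvectorBasis l]
      simp [hμdef, hBdef]
    simp_rw [h1]
    have : ∑ i, (B m) i * ((N:ℝ) * (μ l * (B l) i))
        = (N:ℝ) * μ l * ∑ i, (B m) i * (B l) i := by
      rw [Finset.mul_sum]
      exact Finset.sum_congr rfl fun i _ => by ring
    rw [this, hBon]
  have hw0 : ∀ m, μ m = 0 → w m = 0 := by
    intro m hm
    have := hww m m
    rw [hm] at this
    simp at this
    exact this
  -- normalized eigen-snapshots
  set z : Fin N → X := fun m => (Real.sqrt ((N:ℝ) * μ m))⁻¹ • w m with hzdef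
  have hzz : ∀ m l, μ m ≠ 0 → μ l ≠ 0 →
      ⟪z m, z l⟫ = if m = l then (1:ℝ) else 0 := by
    intro m l hm hl
    have hmpos : 0 < (N:ℝ) * μ m := by
      have := lt_of_le_of_ne (hμnn m) (Ne.symm hm); positivity
    have hlpos : 0 < (N:ℝ) * μ l := by
      have := lt_of_le_of_ne (hμnn l) (Ne.symm hl); positivity
    rw [hzdef]
    simp only [real_inner_smul_left, real_inner_smul_right, hww]
    by_cases h : m = l
    · subst h
      simp only [if_pos rfl, mul_one]
      set a := Real.sqrt ((N:ℝ) * μ m) with ha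
      have hs : a * a = (N:ℝ) * μ m := Real.mul_self_sqrt hmpos.le
      have hs0 : a ≠ 0 := by rw [ha]; positivity
      rw [← hs]
      field_simp
    · simp [h]
  have hwz : ∀ m, μ m ≠ 0 → w m = Real.sqrt ((N:ℝ) * μ m) • z m := by
    intro m hm
    have hmpos : 0 < (N:ℝ) * μ m := by
      have := lt_of_le_of_ne (hμnn m) (Ne.symm hm); positivity
    rw [hzdef]
    rw [smul_inv_smul₀ (by positivity : Real.sqrt ((N:ℝ) * μ m) ≠ 0)]
  -- capture coefficients
  set t : Fin N → ℝ := fun m => if μ m = 0 then 0 else ∑ j, ⟪z m, ψ j⟫ ^ 2 with htdef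
  have hcap : ∀ m, ∑ j, ⟪w m, ψ j⟫ ^ 2 = (N:ℝ) * μ m * t m := by
    intro m
    by_cases hm : μ m = 0
    · simp [htdef, hm, hw0 m hm]
    · have hmpos : 0 < (N:ℝ) * μ m := by
        have := lt_of_le_of_ne (hμnn m) (Ne.symm hm); positivity
      rw [htdef]
      simp only
      rw [if_neg hm, Finset.mul_sum]
      refine Finset.sum_congr rfl fun j _ => ?_
      rw [hwz m hm, real_inner_smul_left]
      rw [mul_pow, Real.sq_sqrt (le_of_lt hmpos)]
  have ht0 : ∀ m, 0 ≤ t m := by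
    intro m
    rw [htdef]
    by_cases hm : μ m = 0 <;> simp [hm]
    positivity
  have ht1 : ∀ m, t m ≤ 1 := by
    intro m
    rw [htdef]
    by_cases hm : μ m = 0
    · simp [hm]
    · simp only
      rw [if_neg hm]
      have hz1 : ‖z m‖ ^ 2 = 1 := by
        rw [← real_inner_self_eq_norm_sq, hzz m m hm hm]; simp
      have hb := hψon.sum_inner_products_le (z m) (s := Finset.univ)
      rw [hz1] at hb
      calc ∑ j, ⟪z m, ψ j⟫ ^ 2 = ∑ j, ‖⟪ψ j, z m⟫‖ ^ 2 := by
            refine Finset.sum_congr rfl fun j _ => ?_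
            rw [Real.norm_eq_abs, sq_abs, real_inner_comm]
        _ ≤ 1 := hb
  -- orthonormal family on nonzero eigenvalue indices
  have htsum : ∑ m, t m ≤ (r : ℝ) := by
    classical
    set Z : {m : Fin N // μ m ≠ 0} → X := fun m => z m.1 with hZdef
    have hZon : Orthonormal ℝ Z := by
      rw [orthonormal_iff_ite]
      intro a b
      rw [hZdef]
      simp only
      rw [hzz a.1 b.1 a.2 b.2]
      by_cases h : a = b
      · simp [h]
      · have : a.1 ≠ b.1 := fun hh => h (Subtype.ext hh)
        simp [h, this]
    have h1 : ∑ m, t m = ∑ m : {m : Fin N // μ m ≠ 0}, t m.1 := by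
      rw [← Finset.sum_filter_add_sum_filter_not Finset.univ (fun m => μ m ≠ 0) t]
      have h2 : ∑ m ∈ Finset.univ.filter (fun m => ¬ μ m ≠ 0), t m = 0 := by
        refine Finset.sum_eq_zero fun m hm => ?_
        have : μ m = 0 := by simpa using (Finset.mem_filter.mp hm).2
        simp [htdef, this]
      rw [h2, add_zero]
      exact Finset.sum_subtype _ (by simp) t
    rw [h1]
    have h3 : ∀ m : {m : Fin N // μ m ≠ 0}, t m.1 = ∑ j, ⟪Z m, ψ j⟫ ^ 2 := by
      intro m
      rw [htdef]; simp [m.2, hZdef]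
    simp_rw [h3]
    rw [Finset.sum_comm]
    have h4 : ∀ j : Fin r, ∑ m : {m : Fin N // μ m ≠ 0}, ⟪Z m, ψ j⟫ ^ 2 ≤ 1 := by
      intro j
      have hb := hZon.sum_inner_products_le (ψ j) (s := Finset.univ)
      have hψ1 : ‖ψ j‖ ^ 2 = 1 := by
        rw [← real_inner_self_eq_norm_sq, hψ j j]; simp
      rw [hψ1] at hb
      calc ∑ m : {m : Fin N // μ m ≠ 0}, ⟪Z m, ψ j⟫ ^ 2
          = ∑ m : {m : Fin N // μ m ≠ 0}, ‖⟪Z m, ψ j⟫‖ ^ 2 := by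
            refine Finset.sum_congr rfl fun m _ => ?_
            rw [Real.norm_eq_abs, sq_abs]
        _ ≤ 1 := hb
    calc ∑ j : Fin r, ∑ m : {m : Fin N // μ m ≠ 0}, ⟪Z m, ψ j⟫ ^ 2
        ≤ ∑ _j : Fin r, (1:ℝ) := Finset.sum_le_sum fun j _ => h4 j
      _ = (r : ℝ) := by simp
  -- Parseval: per-mode capture
  have hpar : ∀ j : Fin r, ∑ i, ⟪u i, ψ j⟫ ^ 2 = ∑ m, ⟪w m, ψ j⟫ ^ 2 := by
    intro j
    set cvec : EuclideanSpace ℝ (Fin N) := WithLp.toLp 2 (fun i => ⟪u i, ψ j⟫) with hcvec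
    have h2 : ∀ m, ⟪(B m : EuclideanSpace ℝ (Fin N)), cvec⟫ = ⟪w m, ψ j⟫ := by
      intro m
      rw [hwx]
      simp [PiLp.inner_apply, RCLike.inner_apply, conj_trivial, hcvec, mul_comm]
    have h1 := B.sum_inner_mul_inner cvec cvec
    have h3 : ⟪cvec, cvec⟫ = ∑ i, ⟪u i, ψ j⟫ ^ 2 := by
      rw [hcvec, PiLp.inner_apply]
      simp [RCLike.inner_apply, conj_trivial, sq]
    rw [h3] at h1
    rw [← h1]
    refine Finset.sum_congr rfl fun m _ => ?_
    rw [real_inner_comm (B m) cvec, h2 m, sq]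
  -- Pythagoras
  have hpyth : ∀ i, ‖u i - ∑ j, ⟪u i, ψ j⟫ • ψ j‖ ^ 2
      = ‖u i‖ ^ 2 - ∑ j, ⟪u i, ψ j⟫ ^ 2 := by
    intro i
    rw [norm_sub_sq_real]
    have h1 : ⟪u i, ∑ j, ⟪u i, ψ j⟫ • ψ j⟫ = ∑ j, ⟪u i, ψ j⟫ ^ 2 := by
      rw [inner_sum]
      refine Finset.sum_congr rfl fun j _ => ?_
      rw [real_inner_smul_right, sq]
    have h2 : ‖∑ j, ⟪u i, ψ j⟫ • ψ j‖ ^ 2 = ∑ j, ⟪u i, ψ j⟫ ^ 2 := by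
      rw [← real_inner_self_eq_norm_sq, inner_sum]
      refine Finset.sum_congr rfl fun j _ => ?_
      rw [real_inner_smul_right, hψon.inner_left_fintype]
      simp [sq]
    rw [h1, h2]; ring
  -- trace identity
  have htr : (1/(N:ℝ)) * ∑ i, ‖u i‖ ^ 2 = ∑ k, lam k := by
    have h1 : K.trace = ∑ m, μ m := by
      conv_lhs => rw [hherm.spectral_theorem]
      rw [Unitary.conjStarAlgAut_apply]
      rw [Matrix.trace_mul_comm, ← Matrix.mul_assoc, Unitary.coe_star_mul_self, one_mul,
        Matrix.trace_diagonal]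
      simp [hμdef]
    have h2 : K.trace = (1/(N:ℝ)) * ∑ i, ‖u i‖ ^ 2 := by
      rw [Matrix.trace, Finset.mul_sum]
      refine Finset.sum_congr rfl fun i _ => ?_
      simp only [Matrix.diag_apply]
      rw [hK, real_inner_self_eq_norm_sq]
    have h3 : ∑ m, μ m = ∑ k, lam k := by
      rw [← Equiv.sum_comp σ μ]
      exact Finset.sum_congr rfl fun k _ => (hσ k).symm
    rw [← h2, h1, h3]
  -- capture sum
  have hcapsum : (1/(N:ℝ)) * ∑ i, ∑ j, ⟪u i, ψ j⟫ ^ 2 = ∑ m, μ m * t m := by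
    rw [Finset.sum_comm]
    have : ∑ j : Fin r, ∑ i, ⟪u i, ψ j⟫ ^ 2 = ∑ m, (N:ℝ) * μ m * t m := by
      calc ∑ j : Fin r, ∑ i, ⟪u i, ψ j⟫ ^ 2
          = ∑ j : Fin r, ∑ m, ⟪w m, ψ j⟫ ^ 2 := Finset.sum_congr rfl fun j _ => hpar j
        _ = ∑ m, ∑ j : Fin r, ⟪w m, ψ j⟫ ^ 2 := Finset.sum_comm
        _ = ∑ m, (N:ℝ) * μ m * t m := Finset.sum_congr rfl fun m _ => hcap m
    rw [this, Finset.mul_sum]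
    refine Finset.sum_congr rfl fun m _ => ?_
    field_simp
  -- combinatorial bound
  have hsum' : ∑ k, t (σ k) ≤ (r : ℝ) := by
    rw [Equiv.sum_comp σ t]; exact htsum
  have hcomb := pod_comb hr lam (fun k => t (σ k)) hsorted hnonneg
    (fun k => ht0 (σ k)) (fun k => ht1 (σ k)) hsum'
  have hμt : ∑ m, μ m * t m = ∑ k, lam k * t (σ k) := by
    rw [← Equiv.sum_comp σ (fun m => μ m * t m)]
    exact Finset.sum_congr rfl fun k _ => by rw [← hσ k]
  -- assemble
  have hRHS : (1/(N:ℝ)) * ∑ i, ‖u i - ∑ j, ⟪u i, ψ j⟫ • ψ j‖ ^ 2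
      = ∑ k, lam k - ∑ m, μ m * t m := by
    rw [← htr, ← hcapsum, ← mul_sub, ← Finset.sum_sub_distrib]
    congr 1
    exact Finset.sum_congr rfl fun i _ => hpyth i
  have hfilterne : Finset.univ.filter (fun j : Fin N => ¬ (j:ℕ) < r)
      = Finset.univ.filter (fun j : Fin N => r ≤ (j:ℕ)) := by
    refine Finset.filter_congr fun j _ => ?_
    simp [not_lt]
  have hsplit := Finset.sum_filter_add_sum_filter_not Finset.univ
    (fun j : Fin N => (j:ℕ) < r) lam
  rw [hfilterne] at hsplit
  rw [hRHS]
  rw [hμt]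
  linarith [hcomb, hsplit]
end
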